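/- Let G = (V, ∅, ℓ) be a parallel episode (an episode with no edges). For each label l, fix a strict linear order ≺_l on the set ℓ⁻¹(l) of vertices labeled l, and let H = (V, E, ℓ) be the episode whose edge set is E = {(v, w) : v ≠ w, ℓ(v) = ℓ(w), v ≺_{ℓ(v)} w}. Then H is a strict episode, and any sequence S over Σ covers G if and only if S covers H. -/

import Mathlib

open scoped Classical

/-- An episode: a finite DAG with labelled vertices. -/
structure Episode (V A : Type*) where
  verts : Finset V
  edges : Finset (V × V)
  lab : V → A
  edges_sub : ∀ e ∈ edges, e.1 ∈ verts ∧ e.2 ∈ verts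
  acyclic : ∀ v, ¬ Relation.TransGen (fun a b => (a, b) ∈ edges) v v

namespace Episode

variable {V A : Type*} [DecidableEq V]

/-- A strict episode: any two distinct vertices sharing a label are connected. -/
def Strict (G : Episode V A) : Prop :=
  ∀ v ∈ G.verts, ∀ w ∈ G.verts, v ≠ w → G.lab v = G.lab w →
    (v, w) ∈ G.edges ∨ (w, v) ∈ G.edges

/-- `W` induces a prefix subgraph of `G`: it is closed under taking ancestors. -/
def IsPrefix (G : Episode V A) (W : Finset V) : Prop :=
  W ⊆ G.verts ∧ ∀ v ∈ W, ∀ w, (w, v) ∈ G.edges → w ∈ W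

/-- Labelled edge of the machine `M(G)`: `(H, F)` is an edge with label `l` when `H` is
obtained from `F` by deleting a single sink vertex of `F` labelled `l`
(states are identified with their vertex sets, as prefix subgraphs are induced). -/
def MachEdge (G : Episode V A) (H F : Finset V) (l : A) : Prop :=
  G.IsPrefix H ∧ G.IsPrefix F ∧
    ∃ x, x ∉ H ∧ F = insert x H ∧ G.lab x = l ∧ ∀ w ∈ F, (x, w) ∉ G.edges

/-- The set of (unlabelled) edges of the machine `M(G)`. -/
def MachineEdges (G : Episode V A) : Set (Finset V × Finset V) :=
  {e | ∃ l, G.MachEdge e.1 e.2 l}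

/-- A sequence `S` covers an episode `G`. -/
def Covers (G : Episode V A) (S : List A) : Prop :=
  ∃ m : V → ℕ, Set.InjOn m ↑G.verts ∧
    (∀ v ∈ G.verts, S[m v]? = some (G.lab v)) ∧
    ∀ e ∈ G.edges, m e.1 < m e.2

/-- The induced episode `G(W)`. -/
def induce (G : Episode V A) (W : Finset V) : Episode V A where
  verts := G.verts ∩ W
  edges := G.edges.filter fun e => e.1 ∈ W ∧ e.2 ∈ W
  lab := G.lab
  edges_sub := by
    intro e he
    rw [Finset.mem_filter] at he
    have h1 := G.edges_sub e he.1
    exact ⟨Finset.mem_inter.mpr ⟨h1.1, he.2.1⟩, Finset.mem_inter.mpr ⟨h1.2, he.2.2⟩⟩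
  acyclic := by
    intro v hv
    have key : ∀ a b, Relation.TransGen (fun a b => (a, b) ∈ G.edges.filter
        fun e => e.1 ∈ W ∧ e.2 ∈ W) a b → Relation.TransGen (fun a b => (a, b) ∈ G.edges) a b := by
      intro a b h
      induction h with
      | single hab => exact Relation.TransGen.single (Finset.mem_filter.mp hab).1
      | tail _ hab ih => exact Relation.TransGen.tail ih (Finset.mem_filter.mp hab).1
    exact G.acyclic v (key v v hv)

/-- One greedy step of the machine `M(G)` from state `H` reading the symbol `s`:
follow the outgoing edge labelled `s` if there is one, otherwise stay. -/
noncomputable def greedyStep (G : Episode V A) (H : Finset V) (s : A) : Finset V :=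
  if h : ∃ F, G.MachEdge H F s then h.choose else H

/-- The greedy state `g(M(G), S, H)`. -/
noncomputable def greedy (G : Episode V A) : Finset V → List A → Finset V
  | H, [] => H
  | H, s :: S => greedy G (G.greedyStep H s) S

/-- The edge set `block(W | G)` of the machine `M(G)`. -/
def Block (G : Episode V A) (W : Finset V) : Set (Finset V × Finset V) :=
  {e | (∃ l, G.MachEdge e.1 e.2 l) ∧ (e.1 ∩ W).Nonempty ∧ e.2 \ e.1 ⊆ W}

/-- The states of the machine `M(G)`: all prefix subgraphs of `G`. -/
noncomputable def states (G : Episode V A) : Finset (Finset V) :=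
  G.verts.powerset.filter fun X => G.IsPrefix X

/-- The number of positions `i` of `S` at which the machine is (greedily) in state `H`
and the symbol read is `l`. -/
noncomputable def countHL (G : Episode V A) (S : List A) (H : Finset V) (l : A) : ℕ :=
  ((Finset.range S.length).filter fun i => G.greedy ∅ (S.take i) = H ∧ S[i]? = some l).card

section Prob

variable [Fintype A]

/-- `pInd G p H n`: probability that `n` i.i.d. symbols with distribution `p`
lead the machine greedily from the source state to `H`. -/
noncomputable def pInd (G : Episode V A) (p : A → ℝ) (H : Finset V) (n : ℕ) : ℝ :=
  ∑ f : Fin n → A, if G.greedy ∅ (List.ofFn f) = H then ∏ i, p (f i) else 0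

/-- Unnormalized weight of label `l` at state `H` in the partition model. -/
noncomputable def pweight (G : Episode V A) (C₁ C₂ : Set (Finset V × Finset V))
    (u : A → ℝ) (t₁ t₂ : ℝ) (H : Finset V) (l : A) : ℝ :=
  if ∃ F, (H, F) ∈ C₁ ∧ G.MachEdge H F l then Real.exp (u l + t₁)
  else if ∃ F, (H, F) ∈ C₂ ∧ G.MachEdge H F l then Real.exp (u l + t₂)
  else Real.exp (u l)

/-- Conditional probability `p(l | H)` of the partition model. -/
noncomputable def condP (G : Episode V A) (C₁ C₂ : Set (Finset V × Finset V))
    (u : A → ℝ) (t₁ t₂ : ℝ) (H : Finset V) (l : A) : ℝ :=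
  G.pweight C₁ C₂ u t₁ t₂ H l / ∑ l' : A, G.pweight C₁ C₂ u t₁ t₂ H l'

/-- Probability of a sequence under the partition model, started from state `H`. -/
noncomputable def seqP (G : Episode V A) (C₁ C₂ : Set (Finset V × Finset V))
    (u : A → ℝ) (t₁ t₂ : ℝ) : Finset V → List A → ℝ
  | _, [] => 1
  | H, s :: S => G.condP C₁ C₂ u t₁ t₂ H s * seqP G C₁ C₂ u t₁ t₂ (G.greedyStep H s) S

/-- `pPart G C₁ C₂ u t₁ t₂ H n`: probability under the partition model that a random
sequence of length `n` leads the machine greedily from the source state to `H`. -/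
noncomputable def pPart (G : Episode V A) (C₁ C₂ : Set (Finset V × Finset V))
    (u : A → ℝ) (t₁ t₂ : ℝ) (H : Finset V) (n : ℕ) : ℝ :=
  ∑ f : Fin n → A,
    if G.greedy ∅ (List.ofFn f) = H then G.seqP C₁ C₂ u t₁ t₂ ∅ (List.ofFn f) else 0

end Prob

/-- The transitive closure of an episode. -/
noncomputable def closure (G : Episode V A) : Episode V A where
  verts := G.verts
  edges := (G.verts ×ˢ G.verts).filter fun e =>
    Relation.TransGen (fun a b => (a, b) ∈ G.edges) e.1 e.2
  lab := G.lab
  edges_sub := by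
    intro e he
    rw [Finset.mem_filter] at he
    exact Finset.mem_product.mp he.1
  acyclic := by
    intro v hv
    apply G.acyclic v
    rw [← Relation.transGen_idem (r := fun a b => (a, b) ∈ G.edges)]
    have key : ∀ a b, Relation.TransGen (fun a b => (a, b) ∈ (G.verts ×ˢ G.verts).filter fun e =>
        Relation.TransGen (fun a b => (a, b) ∈ G.edges) e.1 e.2) a b →
        Relation.TransGen (Relation.TransGen (fun a b => (a, b) ∈ G.edges)) a b := by
      intro a b h
      induction h with
      | single hab => exact Relation.TransGen.single (Finset.mem_filter.mp hab).2
      | tail _ hab ih => exact Relation.TransGen.tail ih (Finset.mem_filter.mp hab).2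
    exact key v v hv

end Episode

/-- let `G` be a parallel episode, and for each label `l` fix a strict linear
order `ord l` on the vertices of `G` labelled `l`. Let `H` be the episode on the same
labelled vertices whose edges are the pairs of distinct equally-labelled vertices in the
order `ord`. Then `H` is a strict episode and a sequence covers `G` iff it covers `H`. -/
theorem Episode.parallel_strict_equiv {V A : Type*} [DecidableEq V]
    (G : Episode V A) (hG : G.edges = ∅)
    (ord : A → V → V → Prop)
    (htrans : ∀ l v w x, v ∈ G.verts → w ∈ G.verts → x ∈ G.verts →
      ord l v w → ord l w x → ord l v x)
    (hirr : ∀ l v, v ∈ G.verts → ¬ ord l v v)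
    (htotal : ∀ l v w, v ∈ G.verts → w ∈ G.verts → v ≠ w →
      G.lab v = l → G.lab w = l → ord l v w ∨ ord l w v)
    (H : Episode V A) (hHv : H.verts = G.verts) (hHl : H.lab = G.lab)
    (hHe : H.edges = (G.verts ×ˢ G.verts).filter fun e =>
      e.1 ≠ e.2 ∧ G.lab e.1 = G.lab e.2 ∧ ord (G.lab e.1) e.1 e.2) :
    H.Strict ∧ ∀ S : List A, G.Covers S ↔ H.Covers S := by
  classical
  constructor
  · intro v hv w hw hne hlab
    rw [hHv] at hv hw
    rw [hHl] at hlab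
    rw [hHe]
    rcases htotal (G.lab v) v w hv hw hne rfl hlab.symm with h | h
    · left
      simp only [Finset.mem_filter, Finset.mem_product]
      exact ⟨⟨hv, hw⟩, hne, hlab, h⟩
    · right
      simp only [Finset.mem_filter, Finset.mem_product]
      exact ⟨⟨hw, hv⟩, hne.symm, hlab.symm, hlab ▸ h⟩
  · intro S
    constructor
    · rintro ⟨m, hinj, hlab', hedge⟩
      -- class of a label
      set C : A → Finset V := fun a => G.verts.filter (fun w => G.lab w = a) with hC
      set vals : A → Finset ℕ := fun a => (C a).image m with hvals
      have hCsub : ∀ a, C a ⊆ G.verts := fun a => Finset.filter_subset _ _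
      have hcard : ∀ a, (vals a).card = (C a).card := by
        intro a
        apply Finset.card_image_of_injOn
        exact hinj.mono (by exact_mod_cast hCsub a)
      -- rank of a vertex within its class
      set r : V → ℕ := fun v => ((C (G.lab v)).filter (fun w => ord (G.lab v) w v)).card
        with hrdef
      have hmemC : ∀ v ∈ G.verts, v ∈ C (G.lab v) := by
        intro v hv; simp [hC, hv]
      have hr : ∀ v ∈ G.verts, r v < (C (G.lab v)).card := by
        intro v hv
        apply Finset.card_lt_card
        constructor
        · exact Finset.filter_subset _ _
        · intro hsub
          have := hsub (hmemC v hv)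
          rw [Finset.mem_filter] at this
          exact hirr (G.lab v) v hv this.2
      -- the pick function
      set pick : A → ℕ → ℕ := fun a k =>
        if h : k < (C a).card then
          ((vals a).orderIsoOfFin (hcard a) ⟨k, h⟩ : ℕ) else 0 with hpick
      have hpickmem : ∀ a k (h : k < (C a).card), pick a k ∈ vals a := by
        intro a k h
        simp only [hpick, dif_pos h]
        exact ((vals a).orderIsoOfFin (hcard a) ⟨k, h⟩).2
      have hpickmono : ∀ a k₁ k₂, k₁ < k₂ → (h₂ : k₂ < (C a).card) →
          pick a k₁ < pick a k₂ := by
        intro a k₁ k₂ hlt h₂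
        have h₁ : k₁ < (C a).card := lt_trans hlt h₂
        simp only [hpick, dif_pos h₁, dif_pos h₂]
        have : (⟨k₁, h₁⟩ : Fin (C a).card) < ⟨k₂, h₂⟩ := hlt
        exact_mod_cast ((vals a).orderIsoOfFin (hcard a)).lt_iff_lt.mpr this
      have hpickinj : ∀ a k₁ k₂, k₁ < (C a).card → k₂ < (C a).card →
          pick a k₁ = pick a k₂ → k₁ = k₂ := by
        intro a k₁ k₂ h₁ h₂ heq
        rcases lt_trichotomy k₁ k₂ with h | h | h
        · exact absurd heq (ne_of_lt (hpickmono a k₁ k₂ h h₂))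
        · exact h
        · exact absurd heq.symm (ne_of_lt (hpickmono a k₂ k₁ h h₁))
      -- rank is strictly monotone wrt ord within a class
      have hrmono : ∀ v w, v ∈ G.verts → w ∈ G.verts → G.lab v = G.lab w →
          ord (G.lab v) v w → r v < r w := by
        intro v w hv hw hlvw hord
        have hCeq : C (G.lab w) = C (G.lab v) := by rw [hlvw]
        simp only [hrdef]
        apply Finset.card_lt_card
        constructor
        · intro x hx
          rw [Finset.mem_filter] at hx ⊢
          refine ⟨hCeq ▸ hx.1, ?_⟩
          rw [← hlvw]
          exact htrans (G.lab v) x v w (hCsub _ hx.1) hv hw hx.2 hord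
        · intro hsub
          have hvmem : v ∈ (C (G.lab w)).filter (fun x => ord (G.lab w) x w) := by
            rw [Finset.mem_filter]
            exact ⟨hCeq ▸ hmemC v hv, hlvw ▸ hord⟩
          have := hsub hvmem
          rw [Finset.mem_filter] at this
          exact hirr (G.lab v) v hv this.2
      -- rank is injective on each class
      have hrinj : ∀ v w, v ∈ G.verts → w ∈ G.verts → G.lab v = G.lab w →
          r v = r w → v = w := by
        intro v w hv hw hlvw heq
        by_contra hne
        rcases htotal (G.lab v) v w hv hw hne rfl hlvw.symm with h | h
        · exact absurd heq (ne_of_lt (hrmono v w hv hw hlvw h))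
        · exact absurd heq.symm
            (ne_of_lt (hrmono w v hw hv hlvw.symm (hlvw ▸ h)))
      set m' : V → ℕ := fun v => pick (G.lab v) (r v) with hm'
      have hmem' : ∀ v ∈ G.verts, ∃ x ∈ C (G.lab v), m x = m' v := by
        intro v hv
        have := hpickmem (G.lab v) (r v) (hr v hv)
        simp only [hvals, Finset.mem_image] at this
        rcases this with ⟨x, hx, hmx⟩
        exact ⟨x, hx, hmx⟩
      refine ⟨m', ?_, ?_, ?_⟩
      · intro v hv w hw heq
        rw [Finset.mem_coe, hHv] at hv hw
        by_cases hl : G.lab v = G.lab w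
        · apply hrinj v w hv hw hl
          apply hpickinj (G.lab v) (r v) (r w) (hr v hv) (hl ▸ hr w hw)
          simp only [hm', hl] at heq
          rw [hl]
          exact heq
        · exfalso
          rcases hmem' v hv with ⟨x, hx, hmx⟩
          rcases hmem' w hw with ⟨y, hy, hmy⟩
          have hxy : x = y := by
            apply hinj (by exact_mod_cast hCsub _ hx) (by exact_mod_cast hCsub _ hy)
            rw [hmx, hmy, heq]
          apply hl
          have h1 : G.lab x = G.lab v := (Finset.mem_filter.mp hx).2
          have h2 : G.lab y = G.lab w := (Finset.mem_filter.mp hy).2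
          rw [← h1, hxy, h2]
      · intro v hv
        rw [hHv] at hv
        rcases hmem' v hv with ⟨x, hx, hmx⟩
        have h1 : G.lab x = G.lab v := (Finset.mem_filter.mp hx).2
        rw [← hmx, hlab' x (hCsub _ hx), hHl, h1]
      · intro e he
        rw [hHe, Finset.mem_filter, Finset.mem_product] at he
        rcases he with ⟨⟨h1, h2⟩, hne, hleq, hord⟩
        have := hrmono e.1 e.2 h1 h2 hleq hord
        simp only [hm']
        rw [hleq]
        exact hpickmono _ _ _ this (hr e.2 h2)
    · rintro ⟨m, hinj, hlab', hedge⟩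
      refine ⟨m, ?_, ?_, ?_⟩
      · rw [← hHv]; exact hinj
      · intro v hv
        rw [← hHl]
        exact hlab' v (hHv ▸ hv)
      · intro e he
        rw [hG] at he
        exact absurd he (Finset.notMem_empty e)
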